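/- Let λ ∈ ℝ, set μ_j := −j⁴π⁴ + λ j²π², and let a ∈ ℝ with a ∉ 𝒩₁. Then there exists a constant C > 0 such that for every positive integer j one has ∑_{k≥1, k≠j} 1 / |a + μ_k − μ_j| ≤ C (1 + log j) / j³. -/

import Mathlib

open Real

private lemma tele_strong (m : ℕ) (hm : 2 ≤ m) : ∀ M : ℕ, m ≤ M →
    ∑ k ∈ Finset.Icc m M, (1:ℝ)/(k:ℝ)^2 ≤ 1/((m:ℝ)-1) - 1/(M:ℝ) := by
  refine Nat.le_induction ?_ ?_
  · rw [Finset.Icc_self, Finset.sum_singleton]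
    have hm' : (2:ℝ) ≤ (m:ℝ) := by exact_mod_cast hm
    have key : 1/((m:ℝ)-1) - 1/(m:ℝ) = 1/(((m:ℝ)-1)*m) := by
      rw [div_sub_div _ _ (by nlinarith) (by nlinarith)]
      ring_nf
    rw [key]
    apply one_div_le_one_div_of_le (by nlinarith)
    nlinarith
  · intro n hn ih
    have hn' : (2:ℝ) ≤ (n:ℝ) := by
      have := le_trans hm hn; exact_mod_cast this
    rw [Finset.sum_Icc_succ_top (by omega)]
    have step : (1:ℝ)/((n:ℝ)+1)^2 ≤ 1/(n:ℝ) - 1/((n:ℝ)+1) := by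
      have key : 1/(n:ℝ) - 1/((n:ℝ)+1) = 1/((n:ℝ)*((n:ℝ)+1)) := by field_simp; ring
      rw [key]
      apply one_div_le_one_div_of_le (by nlinarith)
      nlinarith
    push_cast
    linarith [ih]

private lemma tele (m : ℕ) (hm : 2 ≤ m) (t : Finset ℕ) (ht : ∀ k ∈ t, m ≤ k) :
    ∑ k ∈ t, (1:ℝ)/(k:ℝ)^2 ≤ 1/((m:ℝ)-1) := by
  have hm' : (2:ℝ) ≤ (m:ℝ) := by exact_mod_cast hm
  have hsub : t ⊆ Finset.Icc m (t.sup id) := fun k hk =>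
    Finset.mem_Icc.mpr ⟨ht k hk, Finset.le_sup (f := id) hk⟩
  have h1 : ∑ k ∈ t, (1:ℝ)/(k:ℝ)^2 ≤ ∑ k ∈ Finset.Icc m (t.sup id), (1:ℝ)/(k:ℝ)^2 :=
    Finset.sum_le_sum_of_subset_of_nonneg hsub (by intros; positivity)
  refine h1.trans ?_
  rcases le_or_gt m (t.sup id) with h | h
  · have h2 := tele_strong m hm _ h
    have h3 : (0:ℝ) ≤ 1/((t.sup id : ℕ):ℝ) := by positivity
    linarith
  · rw [Finset.Icc_eq_empty (by omega), Finset.sum_empty]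
    have : (0:ℝ) < (m:ℝ) - 1 := by linarith
    positivity

private lemma harm_real (j : ℕ) : ∑ d ∈ Finset.Icc 1 j, (1:ℝ)/(d:ℝ) ≤ 1 + Real.log j := by
  have h := harmonic_le_one_add_log j
  have h2 : ((harmonic j : ℚ) : ℝ) = ∑ d ∈ Finset.Icc 1 j, (1:ℝ)/(d:ℝ) := by
    rw [harmonic_eq_sum_Icc]
    push_cast
    simp [one_div]
  linarith [h2 ▸ h]

set_option maxHeartbeats 1000000 in
private lemma core' (j : ℕ) (hj : 1 ≤ j) (t : Finset ℕ)
    (ht : ∀ k ∈ t, 1 ≤ k ∧ k ≠ j) :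
    ∑ k ∈ t, (1:ℝ)/|(k:ℝ)^4 - (j:ℝ)^4| ≤ 3 * (1 + Real.log j) / (j:ℝ)^3 := by
  classical
  have hj' : (1:ℝ) ≤ (j:ℝ) := by exact_mod_cast hj
  have hjpos : (0:ℝ) < (j:ℝ) := by linarith
  have hlog : (0:ℝ) ≤ Real.log j := Real.log_nonneg hj'
  set g : ℕ → ℝ := fun k => (1:ℝ)/|(k:ℝ)^4 - (j:ℝ)^4| with hg
  have hsplit := Finset.sum_filter_add_sum_filter_not t (fun k => k ≤ 2*j) g
  -- low part
  have hlow : ∑ k ∈ t.filter (fun k => k ≤ 2*j), g k ≤ 2 * (1 + Real.log j) / (j:ℝ)^3 := by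
    set tl := t.filter (fun k => k ≤ 2*j) with htl
    have hsplit2 := Finset.sum_filter_add_sum_filter_not tl (fun k => k < j) g
    have hlow1 : ∑ k ∈ tl.filter (fun k => k < j), g k ≤ (1 + Real.log j) / (j:ℝ)^3 := by
      set s := tl.filter (fun k => k < j) with hs
      have hmem : ∀ k ∈ s, 1 ≤ k ∧ k < j := by
        intro k hk
        simp only [hs, htl, Finset.mem_filter] at hk
        exact ⟨(ht k hk.1.1).1, hk.2⟩
      have hpt : ∀ k ∈ s, g k ≤ (1/(j:ℝ)^3) * (1/((j - k : ℕ):ℝ)) := by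
        intro k hk
        obtain ⟨hk1, hkj⟩ := hmem k hk
        have hk1' : (1:ℝ) ≤ (k:ℝ) := by exact_mod_cast hk1
        have hkj' : (k:ℝ) + 1 ≤ (j:ℝ) := by exact_mod_cast hkj
        have hcast : ((j - k : ℕ):ℝ) = (j:ℝ) - (k:ℝ) := by
          rw [Nat.cast_sub (le_of_lt hkj)]
        rw [hcast]
        have hkle : (k:ℝ) ≤ (j:ℝ) := by linarith
        have hpow : (k:ℝ)^4 ≤ (j:ℝ)^4 := pow_le_pow_left₀ (by linarith) hkle 4
        have habs : |(k:ℝ)^4 - (j:ℝ)^4| = (j:ℝ)^4 - (k:ℝ)^4 := by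
          rw [abs_sub_comm, abs_of_nonneg (by linarith)]
        have hfac : ((j:ℝ)-k) * (((j:ℝ)+k)*((j:ℝ)^2+(k:ℝ)^2)) = (j:ℝ)^4 - (k:ℝ)^4 := by ring
        have hge : (j:ℝ)^3 ≤ ((j:ℝ)+k)*((j:ℝ)^2+(k:ℝ)^2) := by nlinarith
        have hdk : (0:ℝ) < (j:ℝ) - k := by linarith
        have hmul := mul_le_mul_of_nonneg_left hge (le_of_lt hdk)
        rw [hg]; simp only
        rw [habs, one_div_mul_one_div]
        apply one_div_le_one_div_of_le (by positivity)
        nlinarith [hmul, hfac]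
      calc ∑ k ∈ s, g k ≤ ∑ k ∈ s, (1/(j:ℝ)^3) * (1/((j - k : ℕ):ℝ)) :=
            Finset.sum_le_sum hpt
        _ = (1/(j:ℝ)^3) * ∑ k ∈ s, (1/((j - k : ℕ):ℝ)) := by rw [Finset.mul_sum]
        _ ≤ (1/(j:ℝ)^3) * ∑ d ∈ Finset.Icc 1 j, (1:ℝ)/(d:ℝ) := by
            apply mul_le_mul_of_nonneg_left ?_ (by positivity)
            rw [← Finset.sum_image (g := fun k => j - k)
              (f := fun d : ℕ => (1:ℝ)/(d:ℝ)) ?_]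
            · apply Finset.sum_le_sum_of_subset_of_nonneg
              · intro d hd
                simp only [Finset.mem_image] at hd
                obtain ⟨k, hk, rfl⟩ := hd
                obtain ⟨hk1, hkj⟩ := hmem k hk
                exact Finset.mem_Icc.mpr ⟨by omega, by omega⟩
              · intros; positivity
            · intro x hx y hy hxy
              obtain ⟨_, hx2⟩ := hmem x hx
              obtain ⟨_, hy2⟩ := hmem y hy
              simp only at hxy
              omega
        _ ≤ (1/(j:ℝ)^3) * (1 + Real.log j) :=
            mul_le_mul_of_nonneg_left (harm_real j) (by positivity)
        _ = (1 + Real.log j) / (j:ℝ)^3 := by ring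
    have hlow2 : ∑ k ∈ tl.filter (fun k => ¬ k < j), g k ≤ (1 + Real.log j) / (j:ℝ)^3 := by
      set s := tl.filter (fun k => ¬ k < j) with hs
      have hmem : ∀ k ∈ s, j < k ∧ k ≤ 2*j := by
        intro k hk
        simp only [hs, htl, Finset.mem_filter, not_lt] at hk
        have := (ht k hk.1.1).2
        exact ⟨lt_of_le_of_ne hk.2 (Ne.symm this), hk.1.2⟩
      have hpt : ∀ k ∈ s, g k ≤ (1/(j:ℝ)^3) * (1/((k - j : ℕ):ℝ)) := by
        intro k hk
        obtain ⟨hjk, hk2⟩ := hmem k hk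
        have hjk' : (j:ℝ) + 1 ≤ (k:ℝ) := by exact_mod_cast hjk
        have hcast : ((k - j : ℕ):ℝ) = (k:ℝ) - (j:ℝ) := by
          rw [Nat.cast_sub (le_of_lt hjk)]
        rw [hcast]
        have hkle : (j:ℝ) ≤ (k:ℝ) := by linarith
        have hpow : (j:ℝ)^4 ≤ (k:ℝ)^4 := pow_le_pow_left₀ (by linarith) hkle 4
        have habs : |(k:ℝ)^4 - (j:ℝ)^4| = (k:ℝ)^4 - (j:ℝ)^4 := by
          rw [abs_of_nonneg (by linarith)]
        have hfac : ((k:ℝ)-j) * (((k:ℝ)+j)*((k:ℝ)^2+(j:ℝ)^2)) = (k:ℝ)^4 - (j:ℝ)^4 := by ring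
        have hge : (j:ℝ)^3 ≤ ((k:ℝ)+j)*((k:ℝ)^2+(j:ℝ)^2) := by nlinarith
        have hdk : (0:ℝ) < (k:ℝ) - j := by linarith
        have hmul := mul_le_mul_of_nonneg_left hge (le_of_lt hdk)
        rw [hg]; simp only
        rw [habs, one_div_mul_one_div]
        apply one_div_le_one_div_of_le (by positivity)
        nlinarith [hmul, hfac]
      calc ∑ k ∈ s, g k ≤ ∑ k ∈ s, (1/(j:ℝ)^3) * (1/((k - j : ℕ):ℝ)) :=
            Finset.sum_le_sum hpt
        _ = (1/(j:ℝ)^3) * ∑ k ∈ s, (1/((k - j : ℕ):ℝ)) := by rw [Finset.mul_sum]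
        _ ≤ (1/(j:ℝ)^3) * ∑ d ∈ Finset.Icc 1 j, (1:ℝ)/(d:ℝ) := by
            apply mul_le_mul_of_nonneg_left ?_ (by positivity)
            rw [← Finset.sum_image (g := fun k => k - j)
              (f := fun d : ℕ => (1:ℝ)/(d:ℝ)) ?_]
            · apply Finset.sum_le_sum_of_subset_of_nonneg
              · intro d hd
                simp only [Finset.mem_image] at hd
                obtain ⟨k, hk, rfl⟩ := hd
                obtain ⟨hk1, hkj⟩ := hmem k hk
                exact Finset.mem_Icc.mpr ⟨by omega, by omega⟩
              · intros; positivity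
            · intro x hx y hy hxy
              obtain ⟨hx2, _⟩ := hmem x hx
              obtain ⟨hy2, _⟩ := hmem y hy
              simp only at hxy
              omega
        _ ≤ (1/(j:ℝ)^3) * (1 + Real.log j) :=
            mul_le_mul_of_nonneg_left (harm_real j) (by positivity)
        _ = (1 + Real.log j) / (j:ℝ)^3 := by ring
    have heq : (2:ℝ) * (1 + Real.log j) / (j:ℝ)^3
        = (1 + Real.log j) / (j:ℝ)^3 + (1 + Real.log j) / (j:ℝ)^3 := by ring
    rw [heq, ← hsplit2]
    exact add_le_add hlow1 hlow2
  -- high part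
  have hhigh : ∑ k ∈ t.filter (fun k => ¬ k ≤ 2*j), g k ≤ (1 + Real.log j) / (j:ℝ)^3 := by
    set s := t.filter (fun k => ¬ k ≤ 2*j) with hs
    have hmem : ∀ k ∈ s, 2*j + 1 ≤ k := by
      intro k hk
      simp only [hs, Finset.mem_filter, not_le] at hk
      omega
    have hpt : ∀ k ∈ s, g k ≤ (1/(2*(j:ℝ)^2)) * (1/(k:ℝ)^2) := by
      intro k hk
      have hk' := hmem k hk
      have hk'' : 2*(j:ℝ) + 1 ≤ (k:ℝ) := by exact_mod_cast hk'
      have hkle : (j:ℝ) ≤ (k:ℝ) := by linarith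
      have hpow : (j:ℝ)^4 ≤ (k:ℝ)^4 := pow_le_pow_left₀ (by linarith) hkle 4
      have habs : |(k:ℝ)^4 - (j:ℝ)^4| = (k:ℝ)^4 - (j:ℝ)^4 := by
        rw [abs_of_nonneg (by linarith)]
      have haux1 : 4*(j:ℝ)^2 ≤ (k:ℝ)^2 := by nlinarith
      have haux2 : (j:ℝ)^2 ≤ (k:ℝ)^2 := by nlinarith
      have hkpos : (0:ℝ) < (k:ℝ) := by linarith
      rw [hg]; simp only
      rw [habs, one_div_mul_one_div]
      apply one_div_le_one_div_of_le
        (mul_pos (by positivity) (by positivity : (0:ℝ) < (k:ℝ)^2))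
      nlinarith [mul_le_mul_of_nonneg_right haux1 (sq_nonneg (k:ℝ)),
        mul_le_mul_of_nonneg_right haux2 (sq_nonneg (j:ℝ))]
    calc ∑ k ∈ s, g k ≤ ∑ k ∈ s, (1/(2*(j:ℝ)^2)) * (1/(k:ℝ)^2) :=
          Finset.sum_le_sum hpt
      _ = (1/(2*(j:ℝ)^2)) * ∑ k ∈ s, (1:ℝ)/(k:ℝ)^2 := by rw [Finset.mul_sum]
      _ ≤ (1/(2*(j:ℝ)^2)) * (1/(((2*j+1:ℕ):ℝ) - 1)) :=
          mul_le_mul_of_nonneg_left (tele (2*j+1) (by omega) s hmem) (by positivity)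
      _ ≤ (1 + Real.log j) / (j:ℝ)^3 := by
          have hcast : ((2*j+1:ℕ):ℝ) - 1 = 2*(j:ℝ) := by push_cast; ring
          rw [hcast]
          rw [show (1:ℝ) / (2*(j:ℝ)^2) * (1/(2*(j:ℝ))) = 1/(4*(j:ℝ)^3) by
            field_simp; ring]
          rw [div_le_div_iff₀ (by positivity) (by positivity)]
          nlinarith [mul_le_mul_of_nonneg_right (show (1:ℝ) ≤ 1 + Real.log j by linarith)
            (show (0:ℝ) ≤ 4*(j:ℝ)^3 by positivity), pow_pos hjpos 3]
  calc ∑ k ∈ t, g k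
      = ∑ k ∈ t.filter (fun k => k ≤ 2*j), g k
        + ∑ k ∈ t.filter (fun k => ¬ k ≤ 2*j), g k := hsplit.symm
    _ ≤ 2 * (1 + Real.log j) / (j:ℝ)^3 + (1 + Real.log j) / (j:ℝ)^3 :=
        add_le_add hlow hhigh
    _ = 3 * (1 + Real.log j) / (j:ℝ)^3 := by ring

private lemma sq_gap {j k : ℕ} (hkj : k ≠ j) :
    1 ≤ |(k:ℝ)^2 - (j:ℝ)^2| := by
  rcases Nat.lt_or_ge k j with h | h
  · have h' : (k:ℝ) + 1 ≤ (j:ℝ) := by exact_mod_cast h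
    have hk' : (0:ℝ) ≤ (k:ℝ) := Nat.cast_nonneg k
    rw [abs_sub_comm, abs_of_nonneg (by nlinarith)]
    nlinarith
  · have h2 : j < k := lt_of_le_of_ne h (Ne.symm hkj)
    have h' : (j:ℝ) + 1 ≤ (k:ℝ) := by exact_mod_cast h2
    have hj' : (0:ℝ) ≤ (j:ℝ) := Nat.cast_nonneg j
    rw [abs_of_nonneg (by nlinarith)]
    nlinarith

private lemma abs4_eq {j k : ℕ} :
    |(k:ℝ)^4 - (j:ℝ)^4| = |(k:ℝ)^2 - (j:ℝ)^2| * ((k:ℝ)^2 + (j:ℝ)^2) := by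
  rw [show (k:ℝ)^4 - (j:ℝ)^4 = ((k:ℝ)^2-(j:ℝ)^2)*((k:ℝ)^2+(j:ℝ)^2) by ring,
    abs_mul, abs_of_nonneg (show (0:ℝ) ≤ (k:ℝ)^2+(j:ℝ)^2 by positivity)]

private lemma k2_le_abs4 {j k : ℕ} (hkj : k ≠ j) :
    (k:ℝ)^2 ≤ |(k:ℝ)^4 - (j:ℝ)^4| := by
  rw [abs4_eq]
  have h1 := sq_gap hkj
  have hk2 : (0:ℝ) ≤ (k:ℝ)^2 := by positivity
  have hj2 : (0:ℝ) ≤ (j:ℝ)^2 := by positivity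
  nlinarith

private lemma good_bound (lam a : ℝ) {j k : ℕ} (hkj : k ≠ j)
    (hgood : 2*|lam|/π^2 + 4*|a|/π^4 ≤ (j:ℝ)^2 + (k:ℝ)^2) :
    (π^4/4) * |(k:ℝ)^4 - (j:ℝ)^4| ≤
      |a + (-(k:ℝ)^4*π^4 + lam*(k:ℝ)^2*π^2) - (-(j:ℝ)^4*π^4 + lam*(j:ℝ)^2*π^2)| := by
  have hπ : (0:ℝ) < π := Real.pi_pos
  have hπ2 : (0:ℝ) < π^2 := by positivity
  have hπ4 : (0:ℝ) < π^4 := by positivity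
  set x := (k:ℝ) with hx
  set y := (j:ℝ) with hy
  set μ : ℝ := -(x^2-y^2) * (π^2*(x^2+y^2) - lam) * π^2 with hμ
  have hrew : a + (-x^4*π^4 + lam*x^2*π^2) - (-y^4*π^4 + lam*y^2*π^2) = a + μ := by
    rw [hμ]; ring
  rw [hrew]
  have hgood' : 2*|lam| + 4*|a|/π^2 ≤ π^2*(x^2+y^2) := by
    have h2 := mul_le_mul_of_nonneg_left hgood (le_of_lt hπ2)
    calc 2*|lam| + 4*|a|/π^2 = π^2 * (2*|lam|/π^2 + 4*|a|/π^4) := by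
          field_simp
      _ ≤ π^2*((j:ℝ)^2+(k:ℝ)^2) := h2
      _ = π^2*(x^2+y^2) := by rw [hx, hy]; ring
  have haa : (0:ℝ) ≤ 4*|a|/π^2 := by positivity
  have hfac_ge : π^2*(x^2+y^2)/2 ≤ π^2*(x^2+y^2) - lam := by
    have h3 := le_abs_self lam
    linarith
  have hfac_nonneg : (0:ℝ) ≤ π^2*(x^2+y^2) - lam := by
    have hxy0 : (0:ℝ) ≤ π^2*(x^2+y^2) := by positivity
    linarith
  have habsμ : |μ| = |x^2-y^2| * (π^2*(x^2+y^2) - lam) * π^2 := by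
    rw [hμ, abs_mul, abs_mul, abs_neg, abs_of_nonneg hfac_nonneg,
      abs_of_nonneg (le_of_lt hπ2)]
  have hd' : 1 ≤ |x^2 - y^2| := sq_gap hkj
  have habs4 : |x^4 - y^4| = |x^2-y^2| * (x^2+y^2) := abs4_eq
  have hA : (π^4/2)*|x^4-y^4| ≤ |μ| := by
    calc (π^4/2)*|x^4-y^4| = (|x^2-y^2| * (π^2*(x^2+y^2)/2)) * π^2 := by
          rw [habs4]; ring
      _ ≤ (|x^2-y^2| * (π^2*(x^2+y^2) - lam)) * π^2 :=
          mul_le_mul_of_nonneg_right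
            (mul_le_mul_of_nonneg_left hfac_ge (abs_nonneg _)) (le_of_lt hπ2)
      _ = |μ| := by rw [habsμ]
  have hB : 2*|a| ≤ |μ| := by
    have hs4 : 4*|a|/π^4 ≤ x^2+y^2 := by
      have h0 : (0:ℝ) ≤ 2*|lam|/π^2 := by positivity
      have h1 : 2*|lam|/π^2 + 4*|a|/π^4 ≤ x^2+y^2 := by
        rw [hx, hy]; linarith [hgood]
      linarith
    have hs4' : 4*|a| ≤ (x^2+y^2)*π^4 := by
      rw [div_le_iff₀ hπ4] at hs4
      linarith
    calc 2*|a| ≤ (π^2*(x^2+y^2)/2)*π^2 := by nlinarith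
      _ = 1 * (π^2*(x^2+y^2)/2) * π^2 := by ring
      _ ≤ (|x^2-y^2| * (π^2*(x^2+y^2) - lam)) * π^2 :=
          mul_le_mul_of_nonneg_right
            (mul_le_mul hd' hfac_ge (by positivity) (abs_nonneg _)) (le_of_lt hπ2)
      _ = |μ| := by rw [habsμ]
  have htri := abs_add_le (a + μ) (-a)
  rw [abs_neg] at htri
  rw [show a + μ + -a = μ by ring] at htri
  linarith

set_option maxHeartbeats 1000000 in
/-- With μ_j := −j⁴π⁴ + λj²π² and a ∉ 𝒩₁ := {μ_k − μ_j : j, k positive integers},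
there is C > 0 such that ∑_{k≠j} 1/|a + μ_k − μ_j| ≤ C(1 + log j)/j³ for all j. -/
theorem stmt10 (lam a : ℝ)
    (ha : a ∉ {x : ℝ | ∃ j k : ℕ+,
      x = (-(k : ℝ) ^ 4 * π ^ 4 + lam * (k : ℝ) ^ 2 * π ^ 2)
        - (-(j : ℝ) ^ 4 * π ^ 4 + lam * (j : ℝ) ^ 2 * π ^ 2)}) :
    ∃ C > (0 : ℝ), ∀ j : ℕ+,
      Summable (fun k : {k : ℕ+ // k ≠ j} =>
        1 / |a + (-((k : ℕ+) : ℝ) ^ 4 * π ^ 4 + lam * ((k : ℕ+) : ℝ) ^ 2 * π ^ 2)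
          - (-(j : ℝ) ^ 4 * π ^ 4 + lam * (j : ℝ) ^ 2 * π ^ 2)|) ∧
      (∑' k : {k : ℕ+ // k ≠ j},
        1 / |a + (-((k : ℕ+) : ℝ) ^ 4 * π ^ 4 + lam * ((k : ℕ+) : ℝ) ^ 2 * π ^ 2)
          - (-(j : ℝ) ^ 4 * π ^ 4 + lam * (j : ℝ) ^ 2 * π ^ 2)|)
        ≤ C * (1 + Real.log (j : ℝ)) / (j : ℝ) ^ 3 := by
  classical
  have hπ : (0:ℝ) < π := Real.pi_pos
  have hπ4 : (0:ℝ) < π^4 := by positivity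
  set R : ℝ := 2*|lam|/π^2 + 4*|a|/π^4 with hRdef
  obtain ⟨N, hN⟩ := exists_nat_gt R
  have hNlt : ∀ m : ℕ, 1 ≤ m → (m:ℝ)^2 < R → m < N := by
    intro m hm hmR
    by_contra hcon
    push_neg at hcon
    have h1 : (N:ℝ) ≤ (m:ℝ) := by exact_mod_cast hcon
    have hm' : (1:ℝ) ≤ (m:ℝ) := by exact_mod_cast hm
    nlinarith
  set f : ℕ → ℕ → ℝ := fun j k =>
    a + (-(k:ℝ)^4*π^4 + lam*(k:ℝ)^2*π^2) - (-(j:ℝ)^4*π^4 + lam*(j:ℝ)^2*π^2) with hfdef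
  have hfne : ∀ j k : ℕ, 1 ≤ j → 1 ≤ k → f j k ≠ 0 := by
    intro j k hj hk h0
    apply ha
    refine ⟨⟨k, hk⟩, ⟨j, hj⟩, ?_⟩
    show a = (-(j:ℝ)^4*π^4 + lam*(j:ℝ)^2*π^2) - (-(k:ℝ)^4*π^4 + lam*(k:ℝ)^2*π^2)
    rw [hfdef] at h0
    simp only at h0
    linarith
  obtain ⟨δ, hδpos, hδle⟩ : ∃ δ : ℝ, 0 < δ ∧ ∀ j k : ℕ, 1 ≤ j → 1 ≤ k → k ≠ j →
      (j:ℝ)^2 + (k:ℝ)^2 < R → δ ≤ |f j k| := by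
    have hTne : (insert (1:ℝ) (((Finset.range N ×ˢ Finset.range N).filter
        (fun p => 1 ≤ p.1 ∧ 1 ≤ p.2 ∧ p.2 ≠ p.1)).image
        (fun p => |f p.1 p.2|))).Nonempty := ⟨1, Finset.mem_insert_self 1 _⟩
    refine ⟨Finset.min' _ hTne, ?_, ?_⟩
    · have hmem := Finset.min'_mem _ hTne
      rcases Finset.mem_insert.mp hmem with h | h
      · rw [h]; norm_num
      · rw [Finset.mem_image] at h
        obtain ⟨p, hp, hpe⟩ := h
        rw [Finset.mem_filter] at hp
        obtain ⟨_, hp1, hp2, hpne⟩ := hp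
        rw [← hpe]
        exact abs_pos.mpr (hfne p.1 p.2 hp1 hp2)
    · intro j k hj hk hkj hbad
      have hk0 : (0:ℝ) ≤ (k:ℝ)^2 := by positivity
      have hj0 : (0:ℝ) ≤ (j:ℝ)^2 := by positivity
      have hjN : j < N := hNlt j hj (by linarith)
      have hkN : k < N := hNlt k hk (by linarith)
      apply Finset.min'_le
      apply Finset.mem_insert_of_mem
      apply Finset.mem_image.mpr
      refine ⟨(j, k), ?_, rfl⟩
      rw [Finset.mem_filter]
      exact ⟨Finset.mem_product.mpr ⟨Finset.mem_range.mpr hjN, Finset.mem_range.mpr hkN⟩,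
        hj, hk, hkj⟩
  set C : ℝ := (N:ℝ)^4/δ + 12/π^4 with hC
  have hCpos : 0 < C :=
    add_pos_of_nonneg_of_pos (div_nonneg (by positivity) hδpos.le) (by positivity)
  have key : ∀ (j : ℕ), 1 ≤ j → ∀ (t : Finset ℕ), (∀ k ∈ t, 1 ≤ k ∧ k ≠ j) →
      ∑ k ∈ t, 1/|f j k| ≤ C * (1 + Real.log j)/(j:ℝ)^3 := by
    intro j hj t ht
    have hj' : (1:ℝ) ≤ (j:ℝ) := by exact_mod_cast hj
    have hjpos : (0:ℝ) < (j:ℝ) := by linarith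
    have hlog : (0:ℝ) ≤ Real.log j := Real.log_nonneg hj'
    have hsplit := Finset.sum_filter_add_sum_filter_not t
      (fun k : ℕ => (j:ℝ)^2 + (k:ℝ)^2 < R) (fun k => 1/|f j k|)
    have hbad : ∑ k ∈ t.filter (fun k : ℕ => (j:ℝ)^2+(k:ℝ)^2 < R), 1/|f j k|
        ≤ ((N:ℝ)^4/δ) * (1 + Real.log j)/(j:ℝ)^3 := by
      rcases Nat.lt_or_ge j N with hjN | hjN
      · have hterm : ∀ k ∈ t.filter (fun k : ℕ => (j:ℝ)^2+(k:ℝ)^2 < R), 1/|f j k| ≤ 1/δ := by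
          intro k hk
          rw [Finset.mem_filter] at hk
          obtain ⟨hk1, hkj⟩ := ht k hk.1
          exact one_div_le_one_div_of_le hδpos (hδle j k hj hk1 hkj hk.2)
        have hsub : t.filter (fun k : ℕ => (j:ℝ)^2+(k:ℝ)^2 < R) ⊆ Finset.range N := by
          intro k hk
          rw [Finset.mem_filter] at hk
          have hk1 := (ht k hk.1).1
          have hj0 : (0:ℝ) ≤ (j:ℝ)^2 := by positivity
          exact Finset.mem_range.mpr (hNlt k hk1 (by linarith [hk.2]))
        have hcard : (t.filter (fun k : ℕ => (j:ℝ)^2+(k:ℝ)^2 < R)).card ≤ N := by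
          simpa using Finset.card_le_card hsub
        have h1 := Finset.sum_le_card_nsmul _ _ _ hterm
        rw [nsmul_eq_mul] at h1
        have h2 : ((t.filter (fun k : ℕ => (j:ℝ)^2+(k:ℝ)^2 < R)).card : ℝ) * (1/δ)
            ≤ (N:ℝ) * (1/δ) := by
          apply mul_le_mul_of_nonneg_right _ (by positivity)
          exact_mod_cast hcard
        have hjN' : (j:ℝ) ≤ (N:ℝ) := by exact_mod_cast le_of_lt hjN
        have hN0 : (0:ℝ) ≤ (N:ℝ) := by positivity
        have h3 : (N:ℝ) * (1/δ) ≤ ((N:ℝ)^4/δ) * (1 + Real.log j)/(j:ℝ)^3 := by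
          have hj3 : (j:ℝ)^3 ≤ (N:ℝ)^3 := pow_le_pow_left₀ (by linarith) hjN' 3
          rw [show (N:ℝ) * (1/δ) = (N:ℝ)/δ by ring,
            show ((N:ℝ)^4/δ) * (1 + Real.log j)/(j:ℝ)^3
              = ((N:ℝ)^4*(1+Real.log j))/(δ*(j:ℝ)^3) by
                rw [div_mul_eq_mul_div, div_div],
            div_le_div_iff₀ hδpos (by positivity)]
          have e1 : (N:ℝ)*(j:ℝ)^3 ≤ (N:ℝ)^4 := by nlinarith
          nlinarith [mul_le_mul_of_nonneg_right e1 hδpos.le,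
            mul_le_mul_of_nonneg_right (mul_le_mul_of_nonneg_left
              (show (1:ℝ) ≤ 1+Real.log j by linarith)
              (show (0:ℝ) ≤ (N:ℝ)^4 by positivity)) hδpos.le]
        linarith
      · have hempty : t.filter (fun k : ℕ => (j:ℝ)^2+(k:ℝ)^2 < R) = ∅ := by
          rw [Finset.filter_eq_empty_iff]
          intro k hk
          have hN' : (N:ℝ) ≤ (j:ℝ) := by exact_mod_cast hjN
          have hk0 : (0:ℝ) ≤ (k:ℝ)^2 := by positivity
          have hRlt : R < (j:ℝ)^2 := by nlinarith
          push_neg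
          nlinarith
        rw [hempty, Finset.sum_empty]
        positivity
    have hgoodpart : ∑ k ∈ t.filter (fun k : ℕ => ¬((j:ℝ)^2+(k:ℝ)^2 < R)), 1/|f j k|
        ≤ (12/π^4) * (1 + Real.log j)/(j:ℝ)^3 := by
      have hterm : ∀ k ∈ t.filter (fun k : ℕ => ¬((j:ℝ)^2+(k:ℝ)^2 < R)),
          1/|f j k| ≤ (4/π^4) * (1/|(k:ℝ)^4 - (j:ℝ)^4|) := by
        intro k hk
        rw [Finset.mem_filter] at hk
        obtain ⟨hk1, hkj⟩ := ht k hk.1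
        have hgood : 2*|lam|/π^2 + 4*|a|/π^4 ≤ (j:ℝ)^2 + (k:ℝ)^2 := by
          have h6 := hk.2; push_neg at h6; rw [hRdef] at h6; linarith
        have hgb := good_bound lam a hkj hgood
        have hk' : (1:ℝ) ≤ (k:ℝ) := by exact_mod_cast hk1
        have habspos : (0:ℝ) < |(k:ℝ)^4 - (j:ℝ)^4| := by
          have := k2_le_abs4 (j := j) hkj
          nlinarith
        have h5 : 1/|f j k| ≤ 1/((π^4/4) * |(k:ℝ)^4 - (j:ℝ)^4|) := by
          apply one_div_le_one_div_of_le (by positivity)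
          exact hgb
        refine h5.trans ?_
        rw [show (4/π^4) * (1/|(k:ℝ)^4 - (j:ℝ)^4|)
          = 1/((π^4/4) * |(k:ℝ)^4 - (j:ℝ)^4|) by
            rw [eq_div_iff (by positivity)]
            first
            | (field_simp; ring)
            | field_simp]
      calc ∑ k ∈ t.filter (fun k : ℕ => ¬((j:ℝ)^2+(k:ℝ)^2 < R)), 1/|f j k|
          ≤ ∑ k ∈ t.filter (fun k : ℕ => ¬((j:ℝ)^2+(k:ℝ)^2 < R)),
            (4/π^4) * (1/|(k:ℝ)^4 - (j:ℝ)^4|) := Finset.sum_le_sum hterm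
        _ = (4/π^4) * ∑ k ∈ t.filter (fun k : ℕ => ¬((j:ℝ)^2+(k:ℝ)^2 < R)),
            (1:ℝ)/|(k:ℝ)^4 - (j:ℝ)^4| := by rw [Finset.mul_sum]
        _ ≤ (4/π^4) * (3 * (1 + Real.log j) / (j:ℝ)^3) := by
            apply mul_le_mul_of_nonneg_left ?_ (by positivity)
            apply core' j hj
            intro k hk
            rw [Finset.mem_filter] at hk
            exact ht k hk.1
        _ = (12/π^4) * (1 + Real.log j)/(j:ℝ)^3 := by ring
    calc ∑ k ∈ t, 1/|f j k|
        = ∑ k ∈ t.filter (fun k : ℕ => (j:ℝ)^2+(k:ℝ)^2 < R), 1/|f j k|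
          + ∑ k ∈ t.filter (fun k : ℕ => ¬((j:ℝ)^2+(k:ℝ)^2 < R)), 1/|f j k| := hsplit.symm
      _ ≤ ((N:ℝ)^4/δ) * (1 + Real.log j)/(j:ℝ)^3
          + (12/π^4) * (1 + Real.log j)/(j:ℝ)^3 := add_le_add hbad hgoodpart
      _ = C * (1 + Real.log j)/(j:ℝ)^3 := by rw [hC]; ring
  refine ⟨C, hCpos, fun j => ?_⟩
  have hj1 : 1 ≤ (j:ℕ) := j.2
  have hj1' : (1:ℝ) ≤ ((j:ℕ):ℝ) := by exact_mod_cast hj1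
  have hinj : Function.Injective (fun x : {k : ℕ+ // k ≠ j} => ((x:ℕ+):ℕ)) := by
    intro x y hxy
    exact Subtype.ext (PNat.coe_injective hxy)
  have hprop : ∀ x : {k : ℕ+ // k ≠ j}, 1 ≤ ((x:ℕ+):ℕ) ∧ ((x:ℕ+):ℕ) ≠ (j:ℕ) :=
    fun x => ⟨(x:ℕ+).2, fun h => x.2 (PNat.coe_injective h)⟩
  have hmaj : ∀ x : {k : ℕ+ // k ≠ j},
      1/|f (j:ℕ) ((x:ℕ+):ℕ)| ≤ ((N:ℝ)^2/δ + 4/π^4) * (1/(((x:ℕ+):ℕ):ℝ)^2) := by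
    intro x
    obtain ⟨hk1, hkj⟩ := hprop x
    set k : ℕ := ((x:ℕ+):ℕ) with hkdef
    have hk1' : (1:ℝ) ≤ (k:ℝ) := by exact_mod_cast hk1
    have hkpos : (0:ℝ) < (k:ℝ)^2 := by nlinarith
    have hc1 : (0:ℝ) ≤ 4/π^4 := by positivity
    have hc2 : (0:ℝ) ≤ 1/(k:ℝ)^2 := by positivity
    have hc3 : (0:ℝ) ≤ (N:ℝ)^2/δ := div_nonneg (by positivity) hδpos.le
    rcases lt_or_ge (((j:ℕ):ℝ)^2 + ((k:ℕ):ℝ)^2) R with hbad | hgood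
    · have h1 : 1/|f (j:ℕ) k| ≤ 1/δ :=
        one_div_le_one_div_of_le hδpos (hδle (j:ℕ) k hj1 hk1 hkj hbad)
      have hj0 : (0:ℝ) ≤ ((j:ℕ):ℝ)^2 := by positivity
      have hkN : k < N := hNlt k hk1 (by linarith)
      have hkN' : (k:ℝ) ≤ (N:ℝ) := by exact_mod_cast le_of_lt hkN
      have h2 : 1/δ ≤ ((N:ℝ)^2/δ) * (1/(k:ℝ)^2) := by
        rw [show ((N:ℝ)^2/δ) * (1/(k:ℝ)^2) = ((N:ℝ)^2/(k:ℝ)^2) * (1/δ) by ring]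
        have h2a : (1:ℝ) ≤ (N:ℝ)^2/(k:ℝ)^2 := by
          rw [le_div_iff₀ hkpos]
          nlinarith
        nlinarith [mul_le_mul_of_nonneg_right h2a (one_div_nonneg.mpr hδpos.le)]
      calc 1/|f (j:ℕ) k| ≤ 1/δ := h1
        _ ≤ ((N:ℝ)^2/δ) * (1/(k:ℝ)^2) := h2
        _ ≤ ((N:ℝ)^2/δ + 4/π^4) * (1/(k:ℝ)^2) := by nlinarith [mul_nonneg hc1 hc2]
    · have hgood' : 2*|lam|/π^2 + 4*|a|/π^4 ≤ ((j:ℕ):ℝ)^2 + (k:ℝ)^2 := by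
        rw [hRdef] at hgood; linarith
      have hgb := good_bound lam a hkj hgood'
      have hk2 := k2_le_abs4 (j := (j:ℕ)) hkj
      have habspos : (0:ℝ) < |(k:ℝ)^4 - ((j:ℕ):ℝ)^4| := by nlinarith
      have h5 : 1/|f (j:ℕ) k| ≤ 1/((π^4/4) * |(k:ℝ)^4 - ((j:ℕ):ℝ)^4|) :=
        one_div_le_one_div_of_le (by positivity) hgb
      have h6 : 1/((π^4/4) * |(k:ℝ)^4 - ((j:ℕ):ℝ)^4|) ≤ (4/π^4) * (1/(k:ℝ)^2) := by
        rw [show (4/π^4) * (1/(k:ℝ)^2) = 1/((π^4/4) * (k:ℝ)^2) by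
          rw [eq_div_iff (by positivity)]
          first
          | (field_simp; ring)
          | field_simp]
        apply one_div_le_one_div_of_le (by positivity)
        exact mul_le_mul_of_nonneg_left hk2 (by positivity)
      calc 1/|f (j:ℕ) k| ≤ (4/π^4) * (1/(k:ℝ)^2) := h5.trans h6
        _ ≤ ((N:ℝ)^2/δ + 4/π^4) * (1/(k:ℝ)^2) := by
            nlinarith [mul_nonneg hc3 hc2]
  have hsum2 : Summable (fun x : {k : ℕ+ // k ≠ j} => (1:ℝ)/((((x:ℕ+):ℕ)):ℝ)^2) :=
    (Real.summable_one_div_nat_pow.mpr one_lt_two).comp_injective hinj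
  have hsummable : Summable (fun x : {k : ℕ+ // k ≠ j} => 1/|f (j:ℕ) ((x:ℕ+):ℕ)|) := by
    apply Summable.of_nonneg_of_le (fun x => by positivity) hmaj
    exact hsum2.mul_left _
  refine ⟨hsummable, ?_⟩
  apply Summable.tsum_le_of_sum_le hsummable
  intro s
  have hmap := Finset.sum_map s ⟨fun x : {k : ℕ+ // k ≠ j} => ((x:ℕ+):ℕ), hinj⟩
    (fun k => 1/|f (j:ℕ) k|)
  simp only [Function.Embedding.coeFn_mk] at hmap
  rw [← hmap]
  apply key (j:ℕ) hj1
  intro k hk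
  rw [Finset.mem_map] at hk
  obtain ⟨x, hx, rfl⟩ := hk
  exact hprop x
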